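/- If n_l < n_u, then the search space graph is connected: for any two states s, s' in S there is a walk in G from s to s'. -/

import Mathlib

/-- Hamming weight of a binary string: number of coordinates equal to `true`. -/
def HW {N : ℕ} (s : Fin N → Bool) : ℕ :=
  (Finset.univ.filter fun i => s i = true).card

/-- The search space: binary strings of length `N` with Hamming weight in `[nl, nu]`. -/
def searchSpace (N nl nu : ℕ) : Finset (Fin N → Bool) :=
  Finset.univ.filter fun s => nl ≤ HW s ∧ HW s ≤ nu

/-- The search space graph: vertices are the states in the search space, with an edge
between two states iff their Hamming distance is 1. -/
def SearchGraph (N nl nu : ℕ) :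
    SimpleGraph {s : Fin N → Bool // nl ≤ HW s ∧ HW s ≤ nu} where
  Adj s s' := hammingDist s.1 s'.1 = 1
  symm := ⟨fun s s' h => by simpa [hammingDist_comm] using h⟩
  loopless := ⟨fun s h => by simp at h⟩


lemma hd_filter {N : ℕ} (s s' : Fin N → Bool) :
    hammingDist s s' = (Finset.univ.filter fun i => s i ≠ s' i).card := rfl

lemma hd_update_self {N : ℕ} (s : Fin N → Bool) (i : Fin N) (b : Bool) (hb : s i ≠ b) :
    hammingDist s (Function.update s i b) = 1 := by
  rw [hd_filter]
  have : (Finset.univ.filter fun j => s j ≠ Function.update s i b j) = {i} := by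
    ext j
    by_cases hj : j = i <;> simp [Function.update, hj, hb]
  rw [this]; simp

lemma hd_update_toward {N : ℕ} (s s' : Fin N → Bool) (i : Fin N) (hi : s i ≠ s' i) :
    hammingDist (Function.update s i (s' i)) s' = hammingDist s s' - 1 := by
  rw [hd_filter, hd_filter]
  have : (Finset.univ.filter fun j => Function.update s i (s' i) j ≠ s' j)
      = (Finset.univ.filter fun j => s j ≠ s' j).erase i := by
    ext j
    by_cases hj : j = i <;> simp [Function.update, hj]
  rw [this, Finset.card_erase_of_mem (by simp [hi])]

lemma HW_update_true {N : ℕ} (s : Fin N → Bool) (i : Fin N) (hi : s i = false) :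
    HW (Function.update s i true) = HW s + 1 := by
  unfold HW
  have : (Finset.univ.filter fun j => Function.update s i true j = true)
      = insert i (Finset.univ.filter fun j => s j = true) := by
    ext j
    by_cases hj : j = i <;> simp [Function.update, hj]
  rw [this, Finset.card_insert_of_notMem (by simp [hi])]

lemma HW_update_false {N : ℕ} (s : Fin N → Bool) (i : Fin N) (hi : s i = true) :
    HW (Function.update s i false) + 1 = HW s := by
  unfold HW
  have : (Finset.univ.filter fun j => Function.update s i false j = true)
      = (Finset.univ.filter fun j => s j = true).erase i := by
    ext j
    by_cases hj : j = i <;> simp [Function.update, hj]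
  rw [this, Finset.card_erase_add_one (by simp [hi])]

-- existence lemmas
lemma exists_up {N : ℕ} {s s' : Fin N → Bool} (h : HW s < HW s') :
    ∃ i, s i = false ∧ s' i = true := by
  by_contra hc
  push_neg at hc
  have hsub : (Finset.univ.filter fun i => s' i = true) ⊆ (Finset.univ.filter fun i => s i = true) := by
    intro i hi
    simp only [Finset.mem_filter, Finset.mem_univ, true_and] at hi ⊢
    cases h0 : s i
    · exact absurd hi (by simpa using hc i h0)
    · rfl
  exact absurd (Finset.card_le_card hsub) (by simpa [HW] using h)

lemma exists_both {N : ℕ} {s s' : Fin N → Bool} (heq : HW s = HW s') (hne : s ≠ s') :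
    (∃ i, s i = false ∧ s' i = true) ∧ (∃ i, s i = true ∧ s' i = false) := by
  have hAne : (Finset.univ.filter fun i => s i = true) ≠ (Finset.univ.filter fun i => s' i = true) := by
    intro hA
    apply hne
    funext i
    have := Finset.ext_iff.mp hA i
    simp only [Finset.mem_filter, Finset.mem_univ, true_and] at this
    cases h0 : s i
    · cases h0' : s' i
      · rfl
      · exact absurd (this.mpr h0') (by simp [h0])
    · rw [this.mp h0]
  constructor
  · by_contra hc
    push_neg at hc
    have hsub : (Finset.univ.filter fun i => s' i = true) ⊆ (Finset.univ.filter fun i => s i = true) := by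
      intro i hi
      simp only [Finset.mem_filter, Finset.mem_univ, true_and] at hi ⊢
      cases h0 : s i
      · exact absurd hi (by simpa using hc i h0)
      · rfl
    exact hAne (Finset.eq_of_subset_of_card_le hsub (le_of_eq heq)).symm
  · by_contra hc
    push_neg at hc
    have hsub : (Finset.univ.filter fun i => s i = true) ⊆ (Finset.univ.filter fun i => s' i = true) := by
      intro i hi
      simp only [Finset.mem_filter, Finset.mem_univ, true_and] at hi ⊢
      cases h0 : s' i
      · exact absurd (hc i hi) (by simp [h0])
      · rfl
    exact hAne (Finset.eq_of_subset_of_card_le hsub (ge_of_eq heq))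

/-- If `n_l < n_u`, the search space graph is connected: any two states
are joined by a walk. -/
theorem searchGraph_preconnected (N nl nu : ℕ) (h1 : nl < nu) (h2 : nu ≤ N) :
    ∀ s s' : {s : Fin N → Bool // nl ≤ HW s ∧ HW s ≤ nu},
      (SearchGraph N nl nu).Reachable s s' := by
  suffices H : ∀ n (s s' : {s : Fin N → Bool // nl ≤ HW s ∧ HW s ≤ nu}),
      hammingDist s.1 s'.1 ≤ n → (SearchGraph N nl nu).Reachable s s' by
    exact fun s s' => H _ s s' le_rfl
  intro n
  induction n with
  | zero =>
    intro s s' h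
    have : s.1 = s'.1 := hammingDist_eq_zero.mp (Nat.le_zero.mp h)
    rw [Subtype.ext this]
  | succ n ih =>
    intro s s' h
    by_cases h0 : s.1 = s'.1
    · rw [Subtype.ext h0]
    have key : ∀ i, s.1 i ≠ s'.1 i →
        ∀ hl : nl ≤ HW (Function.update s.1 i (s'.1 i)),
        ∀ hu : HW (Function.update s.1 i (s'.1 i)) ≤ nu,
        (SearchGraph N nl nu).Reachable s s' := by
      intro i hi hl hu
      set t : {s : Fin N → Bool // nl ≤ HW s ∧ HW s ≤ nu} :=
        ⟨Function.update s.1 i (s'.1 i), hl, hu⟩ with ht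
      have hadj : (SearchGraph N nl nu).Adj s t := hd_update_self s.1 i (s'.1 i) hi
      have hdist : hammingDist t.1 s'.1 ≤ n := by
        rw [ht, hd_update_toward s.1 s'.1 i hi]
        have : hammingDist s.1 s'.1 ≠ 0 := fun hz => h0 (hammingDist_eq_zero.mp hz)
        omega
      exact (hadj.reachable).trans (ih t s' hdist)
    rcases lt_trichotomy (HW s.1) (HW s'.1) with hlt | heq | hgt
    · obtain ⟨i, hi0, hi1⟩ := exists_up hlt
      have hHW : HW (Function.update s.1 i (s'.1 i)) = HW s.1 + 1 := by
        rw [hi1]; exact HW_update_true s.1 i hi0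
      exact key i (by simp [hi0, hi1]) (by rw [hHW]; have := s.2.1; omega)
        (by rw [hHW]; have := s'.2.2; omega)
    · obtain ⟨⟨i, hi0, hi1⟩, ⟨j, hj1, hj0⟩⟩ := exists_both heq h0
      by_cases hcase : HW s.1 < nu
      · have hHW : HW (Function.update s.1 i (s'.1 i)) = HW s.1 + 1 := by
          rw [hi1]; exact HW_update_true s.1 i hi0
        exact key i (by simp [hi0, hi1]) (by rw [hHW]; have := s.2.1; omega)
          (by rw [hHW]; omega)
      · have hHW : HW (Function.update s.1 j (s'.1 j)) + 1 = HW s.1 := by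
          rw [hj0]; exact HW_update_false s.1 j hj1
        have hs2 := s.2.2
        exact key j (by simp [hj0, hj1]) (by omega) (by omega)
    · obtain ⟨i, hi0, hi1⟩ := exists_up hgt
      have hHW : HW (Function.update s.1 i (s'.1 i)) + 1 = HW s.1 := by
        rw [hi0]; exact HW_update_false s.1 i hi1
      have hs'1 := s'.2.1
      have hs2 := s.2.2
      exact key i (by simp [hi0, hi1]) (by omega) (by omega)
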